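/- For α ∈ (0,1), λ < 0 and t ≥ 0, the function y(t) = E_α(λ t^α) satisfies 0 < y(t) ≤ 1, y is nonincreasing, and y(t) → 0 as t → ∞. -/

import Mathlib

open Set Filter MeasureTheory intervalIntegral Real
open scoped Topology NNReal

/-- The one-parameter Mittag–Leffler function `E_α(x) = Σ xⁿ / Γ(αn + 1)`. -/
noncomputable def mittagLeffler (α x : ℝ) : ℝ :=
  ∑' n : ℕ, x ^ n / Real.Gamma (α * n + 1)

namespace MLaux

variable {α : ℝ}

lemma gamma_pos {b : ℝ} (hb : 0 < b) (hα : 0 ≤ α) (n : ℕ) :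
    0 < Real.Gamma (α * n + b) :=
  Real.Gamma_pos_of_pos (by positivity)

/-- Gautschi-type lower bound from log-convexity. -/
lemma gamma_ratio (hα : 0 < α) (hα1 : α < 1) {x : ℝ} (hx : 0 < x) :
    x * Real.Gamma x ≤ Real.Gamma (x + α) * (x + α) ^ (1 - α) := by
  have hxα : 0 < x + α := by linarith
  have hΓ : 0 < Real.Gamma (x + α) := Real.Gamma_pos_of_pos hxα
  have hΓx : 0 < Real.Gamma x := Real.Gamma_pos_of_pos hx
  have hconv := Real.convexOn_log_Gamma
  have key : Real.log (Real.Gamma (x + 1)) ≤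
      α * Real.log (Real.Gamma (x + α)) + (1 - α) * Real.log (Real.Gamma (x + α + 1)) := by
    have h1 : (x + α) ∈ Ioi (0:ℝ) := hxα
    have h2 : (x + α + 1) ∈ Ioi (0:ℝ) := by simp only [mem_Ioi]; linarith
    have := hconv.2 h1 h2 (le_of_lt hα) (by linarith : (0:ℝ) ≤ 1 - α) (by ring)
    have hcomb : α • (x + α) + (1 - α) • (x + α + 1) = x + 1 := by
      simp only [smul_eq_mul]; ring
    rw [hcomb] at this
    simpa [Function.comp] using this
  have hrec : Real.Gamma (x + α + 1) = (x + α) * Real.Gamma (x + α) :=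
    Real.Gamma_add_one (ne_of_gt hxα)
  have hrecx : Real.Gamma (x + 1) = x * Real.Gamma x := Real.Gamma_add_one (ne_of_gt hx)
  rw [hrec, hrecx, Real.log_mul (ne_of_gt hxα) (ne_of_gt hΓ)] at key
  -- key : log (x * Γ x) ≤ α * log Γ(x+α) + (1-α) * (log (x+α) + log Γ(x+α))
  have key2 : Real.log (x * Real.Gamma x) ≤
      Real.log (Real.Gamma (x + α)) + (1 - α) * Real.log (x + α) := by nlinarith [key]
  have hpos : (0:ℝ) < x * Real.Gamma x := by positivity
  calc x * Real.Gamma x = Real.exp (Real.log (x * Real.Gamma x)) := (Real.exp_log hpos).symm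
    _ ≤ Real.exp (Real.log (Real.Gamma (x + α)) + (1 - α) * Real.log (x + α)) :=
        Real.exp_le_exp.2 key2
    _ = Real.Gamma (x + α) * (x + α) ^ (1 - α) := by
        rw [Real.exp_add, Real.exp_log hΓ, Real.rpow_def_of_pos hxα, mul_comm (1-α)]

lemma summable_aux (hα : 0 < α) (hα1 : α < 1) {b : ℝ} (hb : 0 < b) (x : ℝ) :
    Summable (fun n : ℕ => x ^ n / Real.Gamma (α * n + b)) := by
  apply summable_of_ratio_norm_eventually_le (r := 1/2) (by norm_num)
  -- eventually, the key size condition holds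
  have hz : Tendsto (fun n : ℕ => α * n + b) atTop atTop := by
    apply Tendsto.atTop_add _ tendsto_const_nhds
    exact Tendsto.const_mul_atTop hα (tendsto_natCast_atTop_atTop)
  have hzz : Tendsto (fun n : ℕ => (α * n + b + α) ^ α) atTop atTop := by
    apply (tendsto_rpow_atTop hα).comp
    exact tendsto_atTop_add_const_right _ α hz
  have hev : ∀ᶠ n : ℕ in atTop, 2 * (2 * |x|) ≤ (α * n + b + α) ^ α ∧ α ≤ α * n + b := by
    filter_upwards [hzz.eventually_ge_atTop (2 * (2*|x|)), hz.eventually_ge_atTop α] with n h1 h2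
    exact ⟨h1, h2⟩
  filter_upwards [hev] with n hn
  obtain ⟨h1, h2⟩ := hn
  set z := α * n + b with hzdef
  have hzpos : 0 < z := lt_of_lt_of_le hα h2
  have hzαpos : 0 < z + α := by linarith
  have hΓz : 0 < Real.Gamma z := Real.Gamma_pos_of_pos hzpos
  have hΓzα : 0 < Real.Gamma (z + α) := Real.Gamma_pos_of_pos hzαpos
  -- key : 2|x| * (z+α)^(1-α) ≤ z
  have hkey : 2 * |x| * (z + α) ^ (1 - α) ≤ z := by
    have hr1 : ((z+α) ^ α) * ((z+α) ^ (1-α)) = z + α := by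
      rw [← Real.rpow_add hzαpos]; norm_num
    have hq : 2 * (2*|x|) * ((z+α) ^ (1-α)) ≤ ((z+α)^α) * ((z+α)^(1-α)) := by
      apply mul_le_mul_of_nonneg_right h1 (Real.rpow_nonneg (le_of_lt hzαpos) _)
    rw [hr1] at hq
    -- 4|x| (z+α)^(1-α) ≤ z + α ; and z + α ≤ 2 z since α ≤ z
    nlinarith [Real.rpow_nonneg (le_of_lt hzαpos) (1-α), abs_nonneg x]
  -- now the ratio bound
  have hgr := gamma_ratio hα hα1 hzpos
  have hΓQ : α * (n+1 : ℕ) + b = z + α := by push_cast; ring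
  rw [norm_div, norm_div, Real.norm_eq_abs (Real.Gamma _), Real.norm_eq_abs (Real.Gamma _),
    abs_of_pos (by rw [hΓQ]; exact hΓzα), abs_of_pos hΓz, hΓQ]
  have h3 : |x| * Real.Gamma z * z ≤ (1/2 * Real.Gamma (z+α)) * z := by
    calc |x| * Real.Gamma z * z = |x| * (z * Real.Gamma z) := by ring
      _ ≤ |x| * (Real.Gamma (z + α) * (z+α)^(1-α)) :=
          mul_le_mul_of_nonneg_left hgr (abs_nonneg x)
      _ ≤ 1/2 * Real.Gamma (z+α) * z := by nlinarith [hΓzα.le, abs_nonneg x]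
  have h4 : |x| * Real.Gamma z ≤ 1/2 * Real.Gamma (z+α) :=
    le_of_mul_le_mul_right (by linarith [h3]) hzpos
  rw [div_le_iff₀ hΓzα]
  have hre : 1/2 * (‖x^n‖ / Real.Gamma z) * Real.Gamma (z+α)
      = ‖x^n‖ * (1/2 * Real.Gamma (z+α)) / Real.Gamma z := by ring
  rw [hre, le_div_iff₀ hΓz]
  have hxn : ‖x ^ (n+1)‖ = |x| * ‖x^n‖ := by
    rw [norm_pow, norm_pow, pow_succ, Real.norm_eq_abs, mul_comm]
  rw [hxn]
  calc |x| * ‖x^n‖ * Real.Gamma z = (|x| * Real.Gamma z) * ‖x^n‖ := by ring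
    _ ≤ (1/2 * Real.Gamma (z+α)) * ‖x^n‖ :=
        mul_le_mul_of_nonneg_right h4 (norm_nonneg _)
    _ = ‖x^n‖ * (1/2 * Real.Gamma (z+α)) := by ring


/-- The formal power series of the Mittag-Leffler function. -/
noncomputable def mlSeries (α : ℝ) : FormalMultilinearSeries ℝ ℝ ℝ := fun n =>
  (1 / Real.Gamma (α * n + 1)) • ContinuousMultilinearMap.mkPiAlgebraFin ℝ n ℝ

lemma mlSeries_apply (α : ℝ) (n : ℕ) (x : ℝ) :
    (mlSeries α n fun _ => x) = x ^ n / Real.Gamma (α * n + 1) := by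
  simp [mlSeries, ContinuousMultilinearMap.mkPiAlgebraFin_apply, List.prod_ofFn, div_eq_mul_inv,
    mul_comm]

lemma mlSeries_norm (hα : 0 < α) (n : ℕ) : ‖mlSeries α n‖ ≤ 1 / Real.Gamma (α * n + 1) := by
  have h1 : (0:ℝ) < Real.Gamma (α * n + 1) := Real.Gamma_pos_of_pos (by positivity)
  rw [mlSeries]
  rw [norm_smul (β := ContinuousMultilinearMap ℝ (fun _ : Fin n => ℝ) ℝ)]
  rcases Nat.eq_zero_or_pos n with h | h
  · subst h
    simp [ContinuousMultilinearMap.norm_mkPiAlgebraFin_zero, Real.norm_eq_abs,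
      abs_of_pos (by positivity : (0:ℝ) < 1 / Real.Gamma (α * 0 + 1))]
  · calc ‖(1 / Real.Gamma (α * n + 1))‖ * ‖ContinuousMultilinearMap.mkPiAlgebraFin ℝ n ℝ‖
        ≤ ‖(1 / Real.Gamma (α * n + 1))‖ * 1 := by
          apply mul_le_mul_of_nonneg_left _ (norm_nonneg _)
          exact ContinuousMultilinearMap.norm_mkPiAlgebraFin_le_of_pos h
      _ = 1 / Real.Gamma (α * n + 1) := by
          rw [mul_one, Real.norm_eq_abs, abs_of_pos (by positivity)]

lemma mlSeries_radius (hα : 0 < α) (hα1 : α < 1) : (mlSeries α).radius = ⊤ := by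
  apply FormalMultilinearSeries.radius_eq_top_of_summable_norm
  intro r
  apply Summable.of_nonneg_of_le (fun n => by positivity)
    (fun n => mul_le_mul_of_nonneg_right (mlSeries_norm hα n) (by positivity))
  have := summable_aux hα hα1 one_pos (r : ℝ)
  apply this.congr
  intro n
  rw [div_mul_eq_mul_div, one_mul]

lemma hasFPower (hα : 0 < α) (hα1 : α < 1) :
    HasFPowerSeriesOnBall (mittagLeffler α) (mlSeries α) 0 ⊤ := by
  refine ⟨by rw [mlSeries_radius hα hα1], ENNReal.zero_lt_top, ?_⟩
  intro y _
  have hs := summable_aux hα hα1 one_pos y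
  have : (fun n : ℕ => mlSeries α n fun _ => y)
      = fun n : ℕ => y ^ n / Real.Gamma (α * (n:ℕ) + 1) := by
    funext n; exact mlSeries_apply α n y
  rw [this, zero_add]
  exact hs.hasSum

lemma analyticAt_ml (hα : 0 < α) (hα1 : α < 1) (x : ℝ) :
    AnalyticAt ℝ (mittagLeffler α) x := by
  exact (hasFPower hα hα1).analyticAt_of_mem (y := x) (by simp)

lemma continuous_ml (hα : 0 < α) (hα1 : α < 1) : Continuous (mittagLeffler α) :=
  continuous_iff_continuousAt.2 fun x => (analyticAt_ml hα hα1 x).continuousAt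

lemma ml_zero (hα : 0 < α) : mittagLeffler α 0 = 1 := by
  rw [mittagLeffler, tsum_eq_single 0]
  · norm_num
  · intro n hn
    rw [zero_pow hn, zero_div]

/-- `Real.log` is real-analytic at positive points. -/
lemma analyticAt_log {x : ℝ} (hx : 0 < x) : AnalyticAt ℝ Real.log x := by
  have h1 : AnalyticAt ℂ Complex.log (x : ℂ) :=
    analyticAt_clog (Complex.ofReal_mem_slitPlane.2 hx)
  have h2 : AnalyticAt ℝ Complex.log (x : ℂ) := h1.restrictScalars
  have h3 : AnalyticAt ℝ (fun t : ℝ => Complex.log (t : ℂ)) x :=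
    h2.comp (Complex.ofRealCLM.analyticAt x)
  have h4 : AnalyticAt ℝ (fun t : ℝ => (Complex.log (t : ℂ)).re) x :=
    (Complex.reCLM.analyticAt _).comp h3
  apply h4.congr
  filter_upwards with t
  exact Complex.log_ofReal_re t

/-- `t ↦ t ^ α` is real-analytic at positive points. -/
lemma analyticAt_rpow_const {x : ℝ} (hx : 0 < x) :
    AnalyticAt ℝ (fun t : ℝ => t ^ α) x := by
  have h1 : AnalyticAt ℝ (fun t : ℝ => Real.exp (Real.log t * α)) x :=
    analyticAt_rexp.comp ((analyticAt_log hx).mul analyticAt_const)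
  apply h1.congr
  filter_upwards [eventually_gt_nhds hx] with t ht
  rw [Real.rpow_def_of_pos ht]


/-- Real Beta function evaluation. -/
lemma betaReal {a b : ℝ} (ha : 0 < a) (hb : 0 < b) :
    ∫ x in (0:ℝ)..1, x ^ (a-1) * (1-x) ^ (b-1)
      = Real.Gamma a * Real.Gamma b / Real.Gamma (a+b) := by
  have hcb : Complex.betaIntegral a b
      = ((∫ x in (0:ℝ)..1, x ^ (a-1) * (1-x) ^ (b-1) : ℝ) : ℂ) := by
    rw [← intervalIntegral.integral_ofReal]
    apply intervalIntegral.integral_congr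
    intro x hx
    rw [uIcc_of_le (by norm_num : (0:ℝ) ≤ 1)] at hx
    obtain ⟨hx0, hx1⟩ := hx
    show (x:ℂ) ^ ((a:ℂ) - 1) * (1 - (x:ℂ)) ^ ((b:ℂ)-1) = ((x ^ (a-1) * (1-x) ^ (b-1) : ℝ) : ℂ)
    rw [Complex.ofReal_mul, Complex.ofReal_cpow hx0, Complex.ofReal_cpow (by linarith)]
    push_cast
    ring
  have hc := Complex.Gamma_mul_Gamma_eq_betaIntegral
    (by simpa using ha : 0 < (a:ℂ).re) (by simpa using hb : 0 < (b:ℂ).re)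
  rw [hcb] at hc
  rw [← Complex.ofReal_add, Complex.Gamma_ofReal, Complex.Gamma_ofReal,
    Complex.Gamma_ofReal] at hc
  have hc' : ((Real.Gamma a * Real.Gamma b : ℝ) : ℂ)
      = ((Real.Gamma (a+b) * ∫ x in (0:ℝ)..1, x ^ (a-1) * (1-x) ^ (b-1) : ℝ) : ℂ) := by
    push_cast
    exact hc
  have heq := Complex.ofReal_inj.1 hc'
  have hΓ : (0:ℝ) < Real.Gamma (a+b) := Real.Gamma_pos_of_pos (by linarith)
  field_simp
  linear_combination -heq

/-- Scaled Beta: convolution of power kernels. -/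
lemma conv_beta {a b t : ℝ} (ha : 0 < a) (hb : 0 < b) (ht : 0 < t) :
    ∫ s in (0:ℝ)..t, (t-s) ^ (a-1) * s ^ (b-1)
      = Real.Gamma a * Real.Gamma b / Real.Gamma (a+b) * t ^ (a+b-1) := by
  have ht' : t ≠ 0 := ne_of_gt ht
  have hsub := intervalIntegral.integral_comp_mul_left
    (a := 0) (b := 1) (fun s => (t-s) ^ (a-1) * s ^ (b-1)) ht'
  rw [mul_zero, mul_one] at hsub
  have key : (∫ x in (0:ℝ)..1, (fun s => (t-s) ^ (a-1) * s ^ (b-1)) (t * x))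
      = t ^ (a-1) * t ^ (b-1) * ∫ x in (0:ℝ)..1, x ^ (b-1) * (1-x) ^ (a-1) := by
    rw [← intervalIntegral.integral_const_mul]
    apply intervalIntegral.integral_congr
    intro x hx
    rw [uIcc_of_le (by norm_num : (0:ℝ) ≤ 1)] at hx
    obtain ⟨hx0, hx1⟩ := hx
    simp only
    have h1 : t - t * x = t * (1 - x) := by ring
    rw [h1, Real.mul_rpow (le_of_lt ht) (by linarith), Real.mul_rpow (le_of_lt ht) hx0]
    ring
  rw [key, betaReal hb ha, smul_eq_mul] at hsub
  have h2 : (∫ s in (0:ℝ)..t, (t-s) ^ (a-1) * s ^ (b-1))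
      = t * (t ^ (a-1) * t ^ (b-1) * (Real.Gamma b * Real.Gamma a / Real.Gamma (b+a))) := by
    rw [hsub, ← mul_assoc, mul_inv_cancel₀ ht', one_mul]
  rw [h2]
  have hpow : t * (t ^ (a-1) * t ^ (b-1)) = t ^ (a+b-1) := by
    rw [← Real.rpow_add ht (a-1) (b-1)]
    nth_rewrite 1 [← Real.rpow_one t]
    rw [← Real.rpow_add ht]
    congr 1
    ring
  calc t * (t ^ (a-1) * t ^ (b-1) * (Real.Gamma b * Real.Gamma a / Real.Gamma (b+a)))
      = (t * (t ^ (a-1) * t ^ (b-1))) * (Real.Gamma b * Real.Gamma a / Real.Gamma (b+a)) := by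
        ring
    _ = Real.Gamma a * Real.Gamma b / Real.Gamma (a+b) * t ^ (a+b-1) := by
        rw [hpow, mul_comm (Real.Gamma b), add_comm b a]; ring


/-- The solution function `u(t) = E_α(λ t^α)`. -/
noncomputable def U (α lam : ℝ) (t : ℝ) : ℝ := mittagLeffler α (lam * t ^ α)

variable {lam : ℝ}

lemma continuous_rpow_const (hα : 0 ≤ α) : Continuous (fun t : ℝ => t ^ α) := by
  apply continuous_iff_continuousAt.2
  intro x
  rcases eq_or_ne x 0 with h | h
  · subst h; exact Real.continuousAt_rpow_const 0 α (Or.inr hα)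
  · exact Real.continuousAt_rpow_const x α (Or.inl h)

lemma continuous_U (hα : 0 < α) (hα1 : α < 1) : Continuous (U α lam) :=
  (continuous_ml hα hα1).comp (continuous_const.mul (continuous_rpow_const hα.le))

lemma analyticAt_U (hα : 0 < α) (hα1 : α < 1) {t : ℝ} (ht : 0 < t) :
    AnalyticAt ℝ (U α lam) t :=
  (analyticAt_ml hα hα1 _).comp (analyticAt_const.mul (analyticAt_rpow_const ht))

lemma U_zero (hα : 0 < α) : U α lam 0 = 1 := by
  rw [U, Real.zero_rpow (ne_of_gt hα), mul_zero, ml_zero hα]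

lemma U_bdd (hα : 0 < α) (hα1 : α < 1) (T : ℝ) :
    ∃ C : ℝ, ∀ s ∈ uIcc (0:ℝ) T, |U α lam s| ≤ C := by
  obtain ⟨C, hC⟩ := (isCompact_uIcc (a := (0:ℝ)) (b := T)).exists_bound_of_continuousOn
    ((continuous_U hα hα1).continuousOn)
  exact ⟨C, fun s hs => by simpa using hC s hs⟩

/-- interval integrability of kernel times continuous function -/
lemma ker_intble (hα : 0 < α) (hα1 : α < 1) {t : ℝ} {q : ℝ → ℝ}
    (hq : ContinuousOn q (uIcc 0 t)) :
    IntervalIntegrable (fun s => (t-s) ^ (α-1) * q s) volume 0 t := by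
  apply IntervalIntegrable.mul_continuousOn _ hq
  have h1 : IntervalIntegrable (fun x : ℝ => x ^ (α-1)) volume 0 t :=
    intervalIntegrable_rpow' (by linarith)
  have h2 := (h1.comp_sub_left t).symm
  simpa using h2

lemma ker_intble' (hα : 0 < α) (hα1 : α < 1) {t t' : ℝ} {q : ℝ → ℝ} (h : uIcc 0 t' ⊆ uIcc 0 t)
    (hq : ContinuousOn q (uIcc 0 t)) :
    IntervalIntegrable (fun s => (t-s) ^ (α-1) * q s) volume 0 t' := by
  exact (ker_intble hα hα1 hq).mono_set h

/-- each power term -/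
lemma pow_term_eq (hα : 0 < α) {s : ℝ} (hs : 0 ≤ s) (n : ℕ) :
    (lam * s ^ α) ^ n = lam ^ n * s ^ (α * n) := by
  rw [mul_pow]
  congr 1
  rw [← Real.rpow_natCast (s ^ α) n, ← Real.rpow_mul hs]

/-- The key Volterra integral equation satisfied by `u`. -/
lemma inteq (hα : 0 < α) (hα1 : α < 1) (hlam : lam < 0) {t : ℝ} (ht : 0 < t) :
    U α lam t = 1 + (lam / Real.Gamma α) *
      ∫ s in (0:ℝ)..t, (t-s) ^ (α-1) * U α lam s := by
  have hΓα : 0 < Real.Gamma α := Real.Gamma_pos_of_pos hα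
  have htα : 0 < t ^ α := Real.rpow_pos_of_pos ht α
  set F : ℕ → ℝ → ℝ :=
    fun n s => (t-s) ^ (α-1) * (lam ^ n * s ^ (α * n) / Real.Gamma (α * n + 1)) with hF
  -- integrability of each term
  have hγ : ∀ n : ℕ, (0:ℝ) < Real.Gamma (α * n + 1) := fun n => gamma_pos one_pos hα.le n
  have hFint : ∀ n : ℕ, IntervalIntegrable (F n) volume 0 t := by
    intro n
    apply ker_intble hα hα1
    apply ContinuousOn.div_const
    apply ContinuousOn.mul continuousOn_const
    apply Continuous.continuousOn
    exact continuous_rpow_const (by positivity : (0:ℝ) ≤ α * _)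
  -- value of the integral of each term
  have hFval : ∀ n : ℕ, (∫ s in (0:ℝ)..t, F n s)
      = (lam ^ n / Real.Gamma (α * n + 1)) *
        (Real.Gamma α * Real.Gamma (α * n + 1) / Real.Gamma (α + (α * n + 1)) *
          t ^ (α + (α * n + 1) - 1)) := by
    intro n
    have h1 : (∫ s in (0:ℝ)..t, F n s)
        = ∫ s in (0:ℝ)..t, (lam ^ n / Real.Gamma (α * n + 1)) * ((t-s) ^ (α-1) * s ^ ((α * n + 1) - 1)) := by
      apply intervalIntegral.integral_congr
      intro s _
      simp only [hF, add_sub_cancel_right]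
      ring
    rw [h1, intervalIntegral.integral_const_mul, conv_beta hα (by positivity) ht]
  -- norm integrals
  have hFnorm : ∀ n : ℕ, (∫ s in (0:ℝ)..t, |F n s|)
      = (|lam| ^ n / Real.Gamma (α * n + 1)) *
        (Real.Gamma α * Real.Gamma (α * n + 1) / Real.Gamma (α + (α * n + 1)) *
          t ^ (α + (α * n + 1) - 1)) := by
    intro n
    have h1 : (∫ s in (0:ℝ)..t, |F n s|)
        = ∫ s in (0:ℝ)..t, (|lam| ^ n / Real.Gamma (α * n + 1)) * ((t-s) ^ (α-1) * s ^ ((α * n + 1) - 1)) := by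
      rw [intervalIntegral.integral_of_le ht.le, intervalIntegral.integral_of_le ht.le]
      apply setIntegral_congr_fun measurableSet_Ioc
      intro s hs
      obtain ⟨hs0, hst⟩ := hs
      have h2 : (0:ℝ) ≤ (t-s) ^ (α-1) := Real.rpow_nonneg (by linarith) _
      have h3 : (0:ℝ) ≤ s ^ (α * n) := Real.rpow_nonneg hs0.le _
      simp only [hF, add_sub_cancel_right]
      rw [abs_mul, abs_of_nonneg h2, abs_div, abs_of_pos (hγ n), abs_mul,
        abs_of_nonneg h3, abs_pow]
      ring
    rw [h1, intervalIntegral.integral_const_mul, conv_beta hα (by positivity) ht]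
  -- summability of norm integrals
  have hsum : Summable (fun n : ℕ => ∫ s in (0:ℝ)..t, |F n s|) := by
    have base := (summable_aux hα hα1 (by linarith : (0:ℝ) < 1 + α) (|lam| * t ^ α)).mul_left
      (Real.Gamma α * t ^ α)
    apply base.congr
    intro n
    rw [hFnorm n]
    have e1 : α + (α * n + 1) - 1 = α * n + α := by ring
    have e2 : (|lam| * t ^ α) ^ n = |lam| ^ n * t ^ (α * n) := pow_term_eq hα ht.le n
    rw [e1, e2]
    have e3 : t ^ (α * n + α) = t ^ (α * n) * t ^ α := Real.rpow_add ht _ _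
    have e4 : α * n + (1 + α) = α + (α * n + 1) := by ring
    rw [e3, e4]
    field_simp
  -- exchange sum and integral
  have hexch : (∫ s in (0:ℝ)..t, (t-s) ^ (α-1) * U α lam s)
      = ∑' n : ℕ, ∫ s in (0:ℝ)..t, F n s := by
    have hUeq : ∀ s ∈ Ioc (0:ℝ) t, (t-s) ^ (α-1) * U α lam s = ∑' n : ℕ, F n s := by
      intro s hs
      rw [U, mittagLeffler, ← tsum_mul_left]
      apply tsum_congr
      intro n
      rw [pow_term_eq hα hs.1.le]
    have hsum' : Summable fun n : ℕ => ∫ s in Ioc (0:ℝ) t, ‖F n s‖ := by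
      apply hsum.congr
      intro n
      rw [intervalIntegral.integral_of_le ht.le]
      apply setIntegral_congr_fun measurableSet_Ioc
      intro s _
      show |F n s| = ‖F n s‖
      rw [Real.norm_eq_abs]
    have hswap := MeasureTheory.integral_tsum_of_summable_integral_norm
      (fun n => (intervalIntegrable_iff_integrableOn_Ioc_of_le ht.le).1 (hFint n)) hsum'
    rw [intervalIntegral.integral_of_le ht.le,
      setIntegral_congr_fun measurableSet_Ioc hUeq, ← hswap]
    exact tsum_congr fun n => (intervalIntegral.integral_of_le ht.le).symm
  -- now compute
  rw [hexch, ← tsum_mul_left]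
  have hterm : ∀ n : ℕ, (lam / Real.Gamma α) * ∫ s in (0:ℝ)..t, F n s
      = (lam * t ^ α) ^ (n+1) / Real.Gamma (α * (n+1) + 1) := by
    intro n
    rw [hFval n, pow_term_eq hα ht.le (n+1)]
    have e2 : α + (α * (n:ℝ) + 1) - 1 = α * ((n:ℝ) + 1) := by ring
    have e1 : α + (α * (n:ℝ) + 1) = α * ((n:ℝ)+1) + 1 := by ring
    push_cast
    rw [e2, e1]
    have hγ2 : (0:ℝ) < Real.Gamma (α * ((n:ℝ)+1) + 1) := by
      have := gamma_pos one_pos hα.le (n+1)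
      rwa [(by push_cast; ring : α * ((n+1:ℕ):ℝ) + 1 = α * ((n:ℝ)+1) + 1)] at this
    field_simp
    ring
  rw [tsum_congr hterm]
  have hsml := summable_aux hα hα1 one_pos (lam * t ^ α)
  have := Summable.tsum_eq_zero_add (f := fun n : ℕ => (lam * t ^ α) ^ n / Real.Gamma (α * n + 1)) hsml
  rw [U, mittagLeffler, this]
  congr 1
  · norm_num [Real.Gamma_one]
  · exact tsum_congr fun b => by norm_num

lemma rpow_kernel_mono (hα1 : α < 1) {x y : ℝ} (h0 : 0 < x) (hxy : x ≤ y) :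
    y ^ (α-1) ≤ x ^ (α-1) := by
  have hy0 : 0 < y := lt_of_lt_of_le h0 hxy
  have hy : y = x * (y / x) := by field_simp
  have h1 : (1:ℝ) ≤ y / x := (one_le_div h0).2 hxy
  calc y ^ (α-1) = x ^ (α-1) * (y / x) ^ (α-1) := by
        rw [← Real.mul_rpow h0.le (by positivity), ← hy]
    _ ≤ x ^ (α-1) * 1 := by
        apply mul_le_mul_of_nonneg_left _ (Real.rpow_nonneg h0.le _)
        exact Real.rpow_le_one_of_one_le_of_nonpos h1 (by linarith)
    _ = x ^ (α-1) := mul_one _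

lemma ker_total (hα : 0 < α) (hα1 : α < 1) {t : ℝ} (ht : 0 < t) :
    ∫ s in (0:ℝ)..t, (t-s) ^ (α-1) = t ^ α / α := by
  have h0 : (∫ s in (0:ℝ)..t, (t-s) ^ (α-1))
      = ∫ s in (0:ℝ)..t, (t-s) ^ (α-1) * s ^ ((1:ℝ)-1) := by
    apply intervalIntegral.integral_congr
    intro s _
    norm_num
  rw [h0, conv_beta hα one_pos ht, Real.Gamma_one,
    Real.Gamma_add_one (ne_of_gt hα)]
  have hΓ : 0 < Real.Gamma α := Real.Gamma_pos_of_pos hα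
  have he : α + 1 - 1 = α := by ring
  rw [he]
  field_simp

/-- Nonnegativity of `u` via the first-zero argument. -/
lemma U_nonneg (hα : 0 < α) (hα1 : α < 1) (hlam : lam < 0) :
    ∀ t : ℝ, 0 ≤ t → 0 ≤ U α lam t := by
  have hΓα : 0 < Real.Gamma α := Real.Gamma_pos_of_pos hα
  have hcont : Continuous (U α lam) := continuous_U hα hα1
  by_contra hcon
  push_neg at hcon
  obtain ⟨t₁, ht₁0, ht₁neg⟩ := hcon
  set S : Set ℝ := {t : ℝ | 0 ≤ t ∧ U α lam t < 0} with hS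
  have hSne : S.Nonempty := ⟨t₁, ht₁0, ht₁neg⟩
  have hSbdd : BddBelow S := ⟨0, fun s hs => hs.1⟩
  set t₀ := sInf S with ht₀
  have ht₀0 : 0 ≤ t₀ := le_csInf hSne fun s hs => hs.1
  have hgeleft : ∀ s, 0 ≤ s → s < t₀ → 0 ≤ U α lam s := by
    intro s hs0 hst₀
    by_contra hneg
    push_neg at hneg
    exact absurd (csInf_le hSbdd ⟨hs0, hneg⟩) (not_le.2 hst₀)
  have hU₀le : U α lam t₀ ≤ 0 := by
    by_contra hpos
    push_neg at hpos
    have hev : ∀ᶠ s in 𝓝 t₀, 0 < U α lam s :=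
      (hcont.continuousAt (x := t₀)).eventually (eventually_gt_nhds hpos)
    obtain ⟨ε, hε, hball⟩ := Metric.eventually_nhds_iff.1 hev
    obtain ⟨s, hsS, hslt⟩ := (csInf_lt_iff hSbdd hSne).1
      (by linarith : sInf S < t₀ + ε)
    have hts : t₀ ≤ s := csInf_le hSbdd hsS
    have : 0 < U α lam s := hball (by rw [Real.dist_eq, abs_lt]; constructor <;> linarith)
    linarith [hsS.2]
  have ht₀pos : 0 < t₀ := by
    rcases eq_or_lt_of_le ht₀0 with h | h
    · exfalso
      rw [← h, U_zero hα] at hU₀le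
      linarith
    · exact h
  have hU₀ge : 0 ≤ U α lam t₀ := by
    by_contra hneg
    push_neg at hneg
    have hev : ∀ᶠ s in 𝓝 t₀, U α lam s < 0 :=
      (hcont.continuousAt (x := t₀)).eventually (eventually_lt_nhds hneg)
    obtain ⟨ε, hε, hball⟩ := Metric.eventually_nhds_iff.1 hev
    set s := t₀ - min (ε/2) (t₀/2) with hsdef
    have hmin1 : min (ε/2) (t₀/2) ≤ t₀/2 := min_le_right _ _
    have hmin2 : min (ε/2) (t₀/2) ≤ ε/2 := min_le_left _ _
    have hmin0 : 0 < min (ε/2) (t₀/2) := lt_min (by linarith) (by linarith)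
    have hs0 : 0 ≤ s := by simp only [hsdef]; linarith
    have hslt : s < t₀ := by simp only [hsdef]; linarith
    have hdist : dist s t₀ < ε := by
      rw [Real.dist_eq, abs_lt]
      constructor <;> simp only [hsdef] <;> linarith
    exact absurd (hgeleft s hs0 hslt) (not_le.2 (hball hdist))
  have hU₀ : U α lam t₀ = 0 := le_antisymm hU₀le hU₀ge
  have hgeIcc : ∀ s, s ∈ Icc (0:ℝ) t₀ → 0 ≤ U α lam s := by
    intro s hs
    rcases lt_or_eq_of_le hs.2 with h | h
    · exact hgeleft s hs.1 h
    · rw [h, hU₀]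
  rcases (analyticAt_U hα hα1 ht₀pos (lam := lam)).eventually_eq_zero_or_eventually_ne_zero
    with hcase | hcase
  · obtain ⟨ε, hε, hball⟩ := Metric.eventually_nhds_iff.1 hcase
    obtain ⟨s, hsS, hslt⟩ := (csInf_lt_iff hSbdd hSne).1
      (by linarith : sInf S < t₀ + ε)
    have hts : t₀ ≤ s := csInf_le hSbdd hsS
    have : U α lam s = 0 := hball (by rw [Real.dist_eq, abs_lt]; constructor <;> linarith)
    linarith [hsS.2]
  · rw [eventually_nhdsWithin_iff] at hcase
    obtain ⟨ε, hε, hball⟩ := Metric.eventually_nhds_iff.1 hcase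
    obtain ⟨T, hTS, hTlt⟩ := (csInf_lt_iff hSbdd hSne).1
      (by linarith : sInf S < t₀ + ε)
    have htT : t₀ ≤ T := csInf_le hSbdd hTS
    have ht₀T : t₀ < T := by
      rcases eq_or_lt_of_le htT with h | h
      · exfalso; rw [← h] at hTS; have := hTS.2; rw [hU₀] at this; exact lt_irrefl 0 this
      · exact h
    have hTpos : 0 < T := lt_trans ht₀pos ht₀T
    have hnegIoc : ∀ τ, τ ∈ Ioc t₀ T → U α lam τ < 0 := by
      intro τ hτ
      have hτdist : dist τ t₀ < ε := by
        rw [Real.dist_eq, abs_lt]; constructor <;> [linarith [hτ.1]; linarith [hτ.2]]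
      have hτne : τ ∈ ({t₀}ᶜ : Set ℝ) := by
        simp only [mem_compl_iff, mem_singleton_iff]
        exact ne_of_gt hτ.1
      rcases lt_trichotomy (U α lam τ) 0 with h | h | h
      · exact h
      · exact absurd h (hball hτdist hτne)
      · exfalso
        have h0m : (0:ℝ) ∈ uIcc (U α lam τ) (U α lam T) :=
          Set.mem_uIcc.2 (Or.inr ⟨le_of_lt hTS.2, le_of_lt h⟩)
        obtain ⟨z, hz, hz0⟩ := intermediate_value_uIcc (hcont.continuousOn) h0m
        rw [uIcc_of_le hτ.2] at hz
        have hzdist : dist z t₀ < ε := by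
          rw [Real.dist_eq, abs_lt]; constructor <;> [linarith [hz.1, hτ.1]; linarith [hz.2]]
        have hzne : z ∈ ({t₀}ᶜ : Set ℝ) := by
          simp only [mem_compl_iff, mem_singleton_iff]
          have : t₀ < z := lt_of_lt_of_le hτ.1 hz.1
          exact ne_of_gt this
        exact hball hzdist hzne hz0
    -- integral contradiction at T
    have hsub1 : uIcc (0:ℝ) t₀ ⊆ uIcc (0:ℝ) T := by
      rw [uIcc_of_le ht₀0, uIcc_of_le hTpos.le]
      exact Icc_subset_Icc le_rfl htT
    have hsub2 : uIcc t₀ T ⊆ uIcc (0:ℝ) T := by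
      rw [uIcc_of_le htT, uIcc_of_le hTpos.le]
      exact Icc_subset_Icc ht₀0 le_rfl
    have hint1 : IntervalIntegrable (fun s => (T-s) ^ (α-1) * U α lam s) volume 0 t₀ :=
      ker_intble' hα hα1 hsub1 (hcont.continuousOn)
    have hint2 : IntervalIntegrable (fun s => (T-s) ^ (α-1) * U α lam s) volume t₀ T :=
      (ker_intble hα hα1 (hcont.continuousOn)).mono_set hsub2
    have hint0 : IntervalIntegrable (fun s => (t₀-s) ^ (α-1) * U α lam s) volume 0 t₀ :=
      ker_intble hα hα1 (hcont.continuousOn)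
    have hsplit := intervalIntegral.integral_add_adjacent_intervals hint1 hint2
    have heq0 := inteq hα hα1 hlam ht₀pos
    rw [hU₀] at heq0
    have heqT := inteq hα hα1 hlam hTpos
    rw [← hsplit] at heqT
    have hA : (∫ s in (0:ℝ)..t₀, (T-s) ^ (α-1) * U α lam s)
        ≤ ∫ s in (0:ℝ)..t₀, (t₀-s) ^ (α-1) * U α lam s := by
      apply intervalIntegral.integral_mono_on ht₀0 hint1 hint0
      intro s hs
      rcases lt_or_eq_of_le hs.2 with h | h
      · apply mul_le_mul_of_nonneg_right
        · exact rpow_kernel_mono hα1 (by linarith) (by linarith)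
        · exact hgeIcc s hs
      · rw [h, hU₀, mul_zero, mul_zero]
    have hB : (∫ s in t₀..T, (T-s) ^ (α-1) * U α lam s) ≤ 0 := by
      have h1 : (0:ℝ) ≤ ∫ s in t₀..T, -((T-s) ^ (α-1) * U α lam s) := by
        apply intervalIntegral.integral_nonneg (le_of_lt ht₀T)
        intro s hs
        rcases eq_or_lt_of_le hs.1 with h | h
        · rw [← h, hU₀, mul_zero, neg_zero]
        · have hUs : U α lam s < 0 := hnegIoc s ⟨h, hs.2⟩
          have hk : (0:ℝ) ≤ (T-s) ^ (α-1) := Real.rpow_nonneg (by linarith [hs.2]) _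
          nlinarith
      rw [intervalIntegral.integral_neg] at h1
      linarith
    have hlamΓ : lam / Real.Gamma α < 0 := div_neg_of_neg_of_pos hlam hΓα
    have h1 : (lam / Real.Gamma α) * (∫ s in (0:ℝ)..t₀, (t₀-s) ^ (α-1) * U α lam s)
        ≤ (lam / Real.Gamma α) * (∫ s in (0:ℝ)..t₀, (T-s) ^ (α-1) * U α lam s) :=
      mul_le_mul_of_nonpos_left hA hlamΓ.le
    have h2 : 0 ≤ (lam / Real.Gamma α) * (∫ s in t₀..T, (T-s) ^ (α-1) * U α lam s) := by
      nlinarith [hB, hlamΓ.le]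
    rw [mul_add] at heqT
    have := hTS.2
    linarith

lemma int_nonneg_of_U (hα : 0 < α) (hα1 : α < 1) (hlam : lam < 0) {a t : ℝ}
    (ha : 0 ≤ a) (hat : a ≤ t) :
    0 ≤ ∫ s in a..t, (t-s) ^ (α-1) * U α lam s := by
  apply intervalIntegral.integral_nonneg hat
  intro s hs
  have h1 : (0:ℝ) ≤ (t-s) ^ (α-1) := Real.rpow_nonneg (by linarith [hs.2]) _
  have h2 : 0 ≤ U α lam s := U_nonneg hα hα1 hlam s (le_trans ha hs.1)
  positivity

lemma U_le_one (hα : 0 < α) (hα1 : α < 1) (hlam : lam < 0) :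
    ∀ t : ℝ, 0 ≤ t → U α lam t ≤ 1 := by
  intro t ht
  rcases eq_or_lt_of_le ht with h | h
  · rw [← h, U_zero hα]
  · have hΓα : 0 < Real.Gamma α := Real.Gamma_pos_of_pos hα
    have heq := inteq hα hα1 hlam h
    have hI := int_nonneg_of_U hα hα1 hlam le_rfl h.le
    have hc : lam / Real.Gamma α < 0 := div_neg_of_neg_of_pos hlam hΓα
    nlinarith

lemma U_lt_one (hα : 0 < α) (hα1 : α < 1) (hlam : lam < 0) {t : ℝ} (ht : 0 < t) :
    U α lam t < 1 := by
  have hΓα : 0 < Real.Gamma α := Real.Gamma_pos_of_pos hα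
  have hcont : Continuous (U α lam) := continuous_U hα hα1
  have heq := inteq hα hα1 hlam ht
  have hc : lam / Real.Gamma α < 0 := div_neg_of_neg_of_pos hlam hΓα
  have hev : ∀ᶠ s in 𝓝 (0:ℝ), 1/2 < U α lam s := by
    have h1 : (1:ℝ)/2 < U α lam 0 := by rw [U_zero hα]; norm_num
    exact (hcont.continuousAt (x := 0)).eventually (eventually_gt_nhds h1)
  obtain ⟨δ, hδ, hball⟩ := Metric.eventually_nhds_iff.1 hev
  set ε' := min (δ/2) (t/2) with hε'def
  have hε'0 : 0 < ε' := lt_min (by linarith) (by linarith)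
  have hε't : ε' < t := lt_of_le_of_lt (min_le_right _ _) (by linarith)
  have hε'δ : ε' < δ := lt_of_le_of_lt (min_le_left _ _) (by linarith)
  have hsub1 : uIcc (0:ℝ) ε' ⊆ uIcc (0:ℝ) t := by
    rw [uIcc_of_le hε'0.le, uIcc_of_le ht.le]
    exact Icc_subset_Icc le_rfl hε't.le
  have hsub2 : uIcc ε' t ⊆ uIcc (0:ℝ) t := by
    rw [uIcc_of_le hε't.le, uIcc_of_le ht.le]
    exact Icc_subset_Icc hε'0.le le_rfl
  have hint1 : IntervalIntegrable (fun s => (t-s) ^ (α-1) * U α lam s) volume 0 ε' :=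
    ker_intble' hα hα1 hsub1 (hcont.continuousOn)
  have hint2 : IntervalIntegrable (fun s => (t-s) ^ (α-1) * U α lam s) volume ε' t :=
    (ker_intble hα hα1 (hcont.continuousOn)).mono_set hsub2
  have hsplit := intervalIntegral.integral_add_adjacent_intervals hint1 hint2
  have hlow : ε' * (t ^ (α-1) * (1/2)) ≤ ∫ s in (0:ℝ)..ε', (t-s) ^ (α-1) * U α lam s := by
    have hmono := intervalIntegral.integral_mono_on (a := 0) (b := ε')
      (f := fun _ : ℝ => t ^ (α-1) * (1/2)) (g := fun s => (t-s) ^ (α-1) * U α lam s)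
      hε'0.le intervalIntegrable_const hint1 ?_
    · rw [intervalIntegral.integral_const, smul_eq_mul, sub_zero] at hmono
      exact hmono
    · intro s hs
      have hs0 : 0 ≤ s := hs.1
      have hsε : s ≤ ε' := hs.2
      have hts : 0 < t - s := by linarith
      have hk : t ^ (α-1) ≤ (t-s) ^ (α-1) := rpow_kernel_mono hα1 hts (by linarith)
      have hU : 1/2 ≤ U α lam s := by
        apply le_of_lt
        apply hball
        rw [Real.dist_eq, abs_lt]
        constructor <;> linarith
      have h1 : (0:ℝ) ≤ t ^ (α-1) := Real.rpow_nonneg ht.le _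
      calc t ^ (α-1) * (1/2) ≤ (t-s) ^ (α-1) * (1/2) :=
            mul_le_mul_of_nonneg_right hk (by norm_num)
        _ ≤ (t-s) ^ (α-1) * U α lam s :=
            mul_le_mul_of_nonneg_left hU (Real.rpow_nonneg hts.le _)
  have hrest := int_nonneg_of_U hα hα1 hlam hε'0.le hε't.le
  have hIpos : 0 < ∫ s in (0:ℝ)..t, (t-s) ^ (α-1) * U α lam s := by
    rw [← hsplit]
    have h1 : 0 < ε' * (t ^ (α-1) * (1/2)) := by
      have := Real.rpow_pos_of_pos ht (α-1)
      positivity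
    linarith
  nlinarith

set_option maxHeartbeats 1600000 in
lemma U_antitone_aux (hα : 0 < α) (hα1 : α < 1) (hlam : lam < 0) {h : ℝ} (hh : 0 < h) :
    ∀ t : ℝ, 0 ≤ t → U α lam (t+h) ≤ U α lam t := by
  have hΓα : 0 < Real.Gamma α := Real.Gamma_pos_of_pos hα
  have hc : lam / Real.Gamma α < 0 := div_neg_of_neg_of_pos hlam hΓα
  have hcont : Continuous (U α lam) := continuous_U hα hα1
  have hcont_h : Continuous (fun t : ℝ => U α lam (t+h)) :=
    hcont.comp (continuous_id.add continuous_const)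
  set W : ℝ → ℝ := fun t => U α lam t - U α lam (t+h) with hWdef
  have hWcont : Continuous W := hcont.sub hcont_h
  set F : ℝ → ℝ :=
    fun t => -(lam / Real.Gamma α) * ∫ s in (0:ℝ)..h, (t+h-s) ^ (α-1) * U α lam s with hFdef
  -- the integral equation for W
  have hWeq : ∀ t : ℝ, 0 ≤ t →
      W t = F t + (lam / Real.Gamma α) * ∫ σ in (0:ℝ)..t, (t-σ) ^ (α-1) * W σ := by
    intro t ht
    rcases eq_or_lt_of_le ht with h0 | h0
    · -- t = 0
      rw [← h0]
      simp only [intervalIntegral.integral_same, mul_zero, add_zero]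
      have heqh := inteq hα hα1 hlam hh
      have hF0 : F 0 = -(lam / Real.Gamma α) * ∫ s in (0:ℝ)..h, (h-s) ^ (α-1) * U α lam s := by
        simp only [hFdef]
        congr 1
        apply intervalIntegral.integral_congr
        intro s _
        norm_num
      simp only [hWdef]
      rw [zero_add, U_zero hα, hF0, heqh]
      ring
    · -- t > 0
      have hth : 0 < t + h := by linarith
      have heqt := inteq hα hα1 hlam h0
      have heqth := inteq hα hα1 hlam hth
      -- split the big integral
      have hsubA : uIcc (0:ℝ) h ⊆ uIcc (0:ℝ) (t+h) := by
        rw [uIcc_of_le hh.le, uIcc_of_le hth.le]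
        exact Icc_subset_Icc le_rfl (by linarith)
      have hsubB : uIcc h (t+h) ⊆ uIcc (0:ℝ) (t+h) := by
        rw [uIcc_of_le (by linarith), uIcc_of_le hth.le]
        exact Icc_subset_Icc hh.le le_rfl
      have hintA : IntervalIntegrable (fun s => (t+h-s) ^ (α-1) * U α lam s) volume 0 h :=
        ker_intble' hα hα1 hsubA (hcont.continuousOn)
      have hintB : IntervalIntegrable (fun s => (t+h-s) ^ (α-1) * U α lam s) volume h (t+h) :=
        (ker_intble hα hα1 (hcont.continuousOn)).mono_set hsubB
      have hsplit := intervalIntegral.integral_add_adjacent_intervals hintA hintB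
      rw [← hsplit] at heqth
      -- change of variables in the second piece
      have hcv : (∫ s in h..(t+h), (t+h-s) ^ (α-1) * U α lam s)
          = ∫ σ in (0:ℝ)..t, (t-σ) ^ (α-1) * U α lam (σ+h) := by
        have hcr := intervalIntegral.integral_comp_add_right (a := 0) (b := t)
          (f := fun s => (t+h-s) ^ (α-1) * U α lam s) h
        rw [zero_add] at hcr
        rw [← hcr]
        apply intervalIntegral.integral_congr
        intro σ _
        show (t + h - (σ + h)) ^ (α-1) * U α lam (σ+h) = (t - σ) ^ (α-1) * U α lam (σ+h)
        have he : t + h - (σ + h) = t - σ := by ring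
        rw [he]
      rw [hcv] at heqth
      -- subtract
      have hint_u : IntervalIntegrable (fun σ => (t-σ) ^ (α-1) * U α lam σ) volume 0 t :=
        ker_intble hα hα1 (hcont.continuousOn)
      have hint_uh : IntervalIntegrable (fun σ => (t-σ) ^ (α-1) * U α lam (σ+h)) volume 0 t :=
        ker_intble hα hα1 (hcont_h.continuousOn)
      have hWint : (∫ σ in (0:ℝ)..t, (t-σ) ^ (α-1) * W σ)
          = (∫ σ in (0:ℝ)..t, (t-σ) ^ (α-1) * U α lam σ)
            - ∫ σ in (0:ℝ)..t, (t-σ) ^ (α-1) * U α lam (σ+h) := by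
        rw [← intervalIntegral.integral_sub hint_u hint_uh]
        apply intervalIntegral.integral_congr
        intro σ _
        simp only [hWdef]
        ring
      simp only [hWdef, hFdef]
      rw [hWint, heqt, heqth]
      ring
  -- now the first-zero argument
  by_contra hcon
  push_neg at hcon
  obtain ⟨t₁, ht₁0, ht₁neg⟩ := hcon
  have ht₁negW : W t₁ < 0 := by simp only [hWdef]; linarith
  set S : Set ℝ := {t : ℝ | 0 ≤ t ∧ W t < 0} with hS
  have hSne : S.Nonempty := ⟨t₁, ht₁0, ht₁negW⟩
  have hSbdd : BddBelow S := ⟨0, fun s hs => hs.1⟩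
  set t₀ := sInf S with ht₀
  have ht₀0 : 0 ≤ t₀ := le_csInf hSne fun s hs => hs.1
  have hgeleft : ∀ s, 0 ≤ s → s < t₀ → 0 ≤ W s := by
    intro s hs0 hst₀
    by_contra hneg
    push_neg at hneg
    exact absurd (csInf_le hSbdd ⟨hs0, hneg⟩) (not_le.2 hst₀)
  have hW₀le : W t₀ ≤ 0 := by
    by_contra hpos
    push_neg at hpos
    have hev : ∀ᶠ s in 𝓝 t₀, 0 < W s :=
      (hWcont.continuousAt (x := t₀)).eventually (eventually_gt_nhds hpos)
    obtain ⟨ε, hε, hball⟩ := Metric.eventually_nhds_iff.1 hev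
    obtain ⟨s, hsS, hslt⟩ := (csInf_lt_iff hSbdd hSne).1
      (by linarith : sInf S < t₀ + ε)
    have hts : t₀ ≤ s := csInf_le hSbdd hsS
    have : 0 < W s := hball (by rw [Real.dist_eq, abs_lt]; constructor <;> linarith)
    linarith [hsS.2]
  have hW0pos : 0 < W 0 := by
    have := U_lt_one hα hα1 hlam hh
    simp only [hWdef]
    rw [zero_add, U_zero hα]
    linarith
  have ht₀pos : 0 < t₀ := by
    rcases eq_or_lt_of_le ht₀0 with h' | h'
    · exfalso; rw [← h'] at hW₀le; linarith
    · exact h'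
  have hW₀ge : 0 ≤ W t₀ := by
    by_contra hneg
    push_neg at hneg
    have hev : ∀ᶠ s in 𝓝 t₀, W s < 0 :=
      (hWcont.continuousAt (x := t₀)).eventually (eventually_lt_nhds hneg)
    obtain ⟨ε, hε, hball⟩ := Metric.eventually_nhds_iff.1 hev
    set s := t₀ - min (ε/2) (t₀/2) with hsdef
    have hmin1 : min (ε/2) (t₀/2) ≤ t₀/2 := min_le_right _ _
    have hmin2 : min (ε/2) (t₀/2) ≤ ε/2 := min_le_left _ _
    have hmin0 : 0 < min (ε/2) (t₀/2) := lt_min (by linarith) (by linarith)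
    have hs0 : 0 ≤ s := by simp only [hsdef]; linarith
    have hslt : s < t₀ := by simp only [hsdef]; linarith
    have hdist : dist s t₀ < ε := by
      rw [Real.dist_eq, abs_lt]
      constructor <;> simp only [hsdef] <;> linarith
    exact absurd (hgeleft s hs0 hslt) (not_le.2 (hball hdist))
  have hW₀ : W t₀ = 0 := le_antisymm hW₀le hW₀ge
  have hgeIcc : ∀ s, s ∈ Icc (0:ℝ) t₀ → 0 ≤ W s := by
    intro s hs
    rcases lt_or_eq_of_le hs.2 with h' | h'
    · exact hgeleft s hs.1 h'
    · rw [h', hW₀]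
  -- analyticity of W at t₀
  have hWana : AnalyticAt ℝ W t₀ := by
    apply AnalyticAt.sub (analyticAt_U hα hα1 ht₀pos)
    have h1 : AnalyticAt ℝ (U α lam) (t₀ + h) := analyticAt_U hα hα1 (by linarith)
    have h2 : AnalyticAt ℝ (fun t : ℝ => t + h) t₀ :=
      (analyticAt_id.add analyticAt_const)
    have h3 := AnalyticAt.comp (f := fun t : ℝ => t + h) (x := t₀) h1 h2
    exact h3
  rcases hWana.eventually_eq_zero_or_eventually_ne_zero with hcase | hcase
  · obtain ⟨ε, hε, hball⟩ := Metric.eventually_nhds_iff.1 hcase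
    obtain ⟨s, hsS, hslt⟩ := (csInf_lt_iff hSbdd hSne).1
      (by linarith : sInf S < t₀ + ε)
    have hts : t₀ ≤ s := csInf_le hSbdd hsS
    have : W s = 0 := hball (by rw [Real.dist_eq, abs_lt]; constructor <;> linarith)
    linarith [hsS.2]
  · rw [eventually_nhdsWithin_iff] at hcase
    obtain ⟨ε, hε, hball⟩ := Metric.eventually_nhds_iff.1 hcase
    obtain ⟨T, hTS, hTlt⟩ := (csInf_lt_iff hSbdd hSne).1
      (by linarith : sInf S < t₀ + ε)
    have htT : t₀ ≤ T := csInf_le hSbdd hTS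
    have ht₀T : t₀ < T := by
      rcases eq_or_lt_of_le htT with h' | h'
      · exfalso; rw [← h'] at hTS; have := hTS.2; rw [hW₀] at this; exact lt_irrefl 0 this
      · exact h'
    have hTpos : 0 < T := lt_trans ht₀pos ht₀T
    have hnegIoc : ∀ τ, τ ∈ Ioc t₀ T → W τ < 0 := by
      intro τ hτ
      have hτdist : dist τ t₀ < ε := by
        rw [Real.dist_eq, abs_lt]; constructor <;> [linarith [hτ.1]; linarith [hτ.2]]
      have hτne : τ ∈ ({t₀}ᶜ : Set ℝ) := by
        simp only [mem_compl_iff, mem_singleton_iff]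
        exact ne_of_gt hτ.1
      rcases lt_trichotomy (W τ) 0 with h' | h' | h'
      · exact h'
      · exact absurd h' (hball hτdist hτne)
      · exfalso
        have h0m : (0:ℝ) ∈ uIcc (W τ) (W T) :=
          Set.mem_uIcc.2 (Or.inr ⟨le_of_lt hTS.2, le_of_lt h'⟩)
        obtain ⟨z, hz, hz0⟩ := intermediate_value_uIcc (hWcont.continuousOn) h0m
        rw [uIcc_of_le hτ.2] at hz
        have hzdist : dist z t₀ < ε := by
          rw [Real.dist_eq, abs_lt]; constructor <;> [linarith [hz.1, hτ.1]; linarith [hz.2]]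
        have hzne : z ∈ ({t₀}ᶜ : Set ℝ) := by
          simp only [mem_compl_iff, mem_singleton_iff]
          exact ne_of_gt (lt_of_lt_of_le hτ.1 hz.1)
        exact hball hzdist hzne hz0
    -- rename for brevity
    set c := lam / Real.Gamma α with hcdef
    have ht₀r : (0:ℝ) < t₀ ^ (α-1) := Real.rpow_pos_of_pos ht₀pos _
    have hTr : (0:ℝ) < T ^ (α-1) := Real.rpow_pos_of_pos hTpos _
    -- the two Volterra identities
    have hWt₀ := hWeq t₀ ht₀0
    rw [hW₀] at hWt₀
    have hWT := hWeq T (by linarith)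
    -- split A + B at T
    have hsub1 : uIcc (0:ℝ) t₀ ⊆ uIcc (0:ℝ) T := by
      rw [uIcc_of_le ht₀0, uIcc_of_le hTpos.le]
      exact Icc_subset_Icc le_rfl htT
    have hsub2 : uIcc t₀ T ⊆ uIcc (0:ℝ) T := by
      rw [uIcc_of_le htT, uIcc_of_le hTpos.le]
      exact Icc_subset_Icc ht₀0 le_rfl
    have hint1 : IntervalIntegrable (fun σ => (T-σ) ^ (α-1) * W σ) volume 0 t₀ :=
      ker_intble' hα hα1 hsub1 (hWcont.continuousOn)
    have hint2 : IntervalIntegrable (fun σ => (T-σ) ^ (α-1) * W σ) volume t₀ T :=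
      (ker_intble hα hα1 (hWcont.continuousOn)).mono_set hsub2
    have hsplit := intervalIntegral.integral_add_adjacent_intervals hint1 hint2
    rw [← hsplit] at hWT
    set A := ∫ σ in (0:ℝ)..t₀, (T-σ) ^ (α-1) * W σ with hA
    set B := ∫ σ in t₀..T, (T-σ) ^ (α-1) * W σ with hB
    set A₀ := ∫ σ in (0:ℝ)..t₀, (t₀-σ) ^ (α-1) * W σ with hA₀
    -- B ≤ 0
    have hBle : B ≤ 0 := by
      have h1 : (0:ℝ) ≤ ∫ σ in t₀..T, -((T-σ) ^ (α-1) * W σ) := by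
        apply intervalIntegral.integral_nonneg (le_of_lt ht₀T)
        intro σ hσ
        rcases eq_or_lt_of_le hσ.1 with h' | h'
        · rw [← h', hW₀, mul_zero, neg_zero]
        · have hWs : W σ < 0 := hnegIoc σ ⟨h', hσ.2⟩
          have hk : (0:ℝ) ≤ (T-σ) ^ (α-1) := Real.rpow_nonneg (by linarith [hσ.2]) _
          nlinarith
      rw [intervalIntegral.integral_neg] at h1
      simp only [hB]
      linarith
    -- comparison (ii): t₀^(α-1) * A ≤ T^(α-1) * A₀
    have hII : t₀ ^ (α-1) * A ≤ T ^ (α-1) * A₀ := by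
      simp only [hA, hA₀]
      rw [← intervalIntegral.integral_const_mul, ← intervalIntegral.integral_const_mul]
      have hintL : IntervalIntegrable (fun σ => t₀ ^ (α-1) * ((T-σ) ^ (α-1) * W σ)) volume 0 t₀ :=
        hint1.const_mul _
      have hintR : IntervalIntegrable (fun σ => T ^ (α-1) * ((t₀-σ) ^ (α-1) * W σ)) volume 0 t₀ :=
        (ker_intble hα hα1 (hWcont.continuousOn)).const_mul _
      apply intervalIntegral.integral_mono_on ht₀0 hintL hintR
      intro σ hσ
      rcases lt_or_eq_of_le hσ.2 with h' | h'
      · have hW : 0 ≤ W σ := hgeIcc σ hσ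
        have hbase : T * (t₀ - σ) ≤ t₀ * (T - σ) := by
          have key : 0 ≤ (T - t₀) * σ := mul_nonneg (by linarith) hσ.1
          nlinarith [key]
        have hbasepos : 0 < T * (t₀ - σ) := by
          apply mul_pos hTpos; linarith
        have hk := rpow_kernel_mono hα1 hbasepos hbase
        have e1 : (t₀ * (T - σ)) ^ (α-1) = t₀ ^ (α-1) * (T - σ) ^ (α-1) :=
          Real.mul_rpow ht₀pos.le (by linarith [lt_of_lt_of_le h' htT] : (0:ℝ) ≤ T - σ)
        have e2 : (T * (t₀ - σ)) ^ (α-1) = T ^ (α-1) * (t₀ - σ) ^ (α-1) :=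
          Real.mul_rpow hTpos.le (by linarith : (0:ℝ) ≤ t₀ - σ)
        rw [e1, e2] at hk
        calc t₀ ^ (α-1) * ((T-σ) ^ (α-1) * W σ) = (t₀ ^ (α-1) * (T-σ) ^ (α-1)) * W σ := by ring
          _ ≤ (T ^ (α-1) * (t₀-σ) ^ (α-1)) * W σ := mul_le_mul_of_nonneg_right hk hW
          _ = T ^ (α-1) * ((t₀-σ) ^ (α-1) * W σ) := by ring
      · rw [h', hW₀, mul_zero, mul_zero, mul_zero, mul_zero]
    -- comparison (i): T^(α-1) * F t₀ ≤ t₀^(α-1) * F T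
    have hFF : T ^ (α-1) * F t₀ ≤ t₀ ^ (α-1) * F T := by
      simp only [hFdef]
      have hrw1 : T ^ (α-1) * (-c * ∫ s in (0:ℝ)..h, (t₀+h-s) ^ (α-1) * U α lam s)
          = -c * ∫ s in (0:ℝ)..h, T ^ (α-1) * ((t₀+h-s) ^ (α-1) * U α lam s) := by
        rw [intervalIntegral.integral_const_mul]; ring
      have hrw2 : t₀ ^ (α-1) * (-c * ∫ s in (0:ℝ)..h, (T+h-s) ^ (α-1) * U α lam s)
          = -c * ∫ s in (0:ℝ)..h, t₀ ^ (α-1) * ((T+h-s) ^ (α-1) * U α lam s) := by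
        rw [intervalIntegral.integral_const_mul]; ring
      rw [hrw1, hrw2]
      have hcpos : (0:ℝ) < -c := by simp only [hcdef]; linarith
      apply mul_le_mul_of_nonneg_left _ hcpos.le
      -- integral comparison over [0,h]
      have hcontL : ContinuousOn (fun s => T ^ (α-1) * ((t₀+h-s) ^ (α-1) * U α lam s))
          (uIcc (0:ℝ) h) := by
        apply ContinuousOn.mul continuousOn_const
        apply ContinuousOn.mul _ (hcont.continuousOn)
        apply ContinuousOn.rpow_const
        · exact (continuousOn_const.sub continuousOn_id)
        · intro x hx
          rw [uIcc_of_le hh.le] at hx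
          left
          have : t₀ + h - x ≥ t₀ := by linarith [hx.2]
          linarith [ht₀pos]
      have hcontR : ContinuousOn (fun s => t₀ ^ (α-1) * ((T+h-s) ^ (α-1) * U α lam s))
          (uIcc (0:ℝ) h) := by
        apply ContinuousOn.mul continuousOn_const
        apply ContinuousOn.mul _ (hcont.continuousOn)
        apply ContinuousOn.rpow_const
        · exact (continuousOn_const.sub continuousOn_id)
        · intro x hx
          rw [uIcc_of_le hh.le] at hx
          left
          have : T + h - x ≥ T := by linarith [hx.2]
          linarith [hTpos]
      apply intervalIntegral.integral_mono_on hh.le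
        (hcontL.intervalIntegrable) (hcontR.intervalIntegrable)
      intro s hs
      have hU : 0 ≤ U α lam s := U_nonneg hα hα1 hlam s hs.1
      have hbase : t₀ * (T + h - s) ≤ T * (t₀ + h - s) := by
        have key : 0 ≤ (T - t₀) * (h - s) := mul_nonneg (by linarith) (by linarith [hs.2])
        nlinarith [key]
      have hbasepos : 0 < t₀ * (T + h - s) := by
        apply mul_pos ht₀pos; linarith [hs.2]
      have hk := rpow_kernel_mono hα1 hbasepos hbase
      have e1 : (t₀ * (T + h - s)) ^ (α-1) = t₀ ^ (α-1) * (T + h - s) ^ (α-1) :=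
        Real.mul_rpow ht₀pos.le (by linarith [hs.2] : (0:ℝ) ≤ T + h - s)
      have e2 : (T * (t₀ + h - s)) ^ (α-1) = T ^ (α-1) * (t₀ + h - s) ^ (α-1) :=
        Real.mul_rpow hTpos.le (by linarith [hs.2] : (0:ℝ) ≤ t₀ + h - s)
      rw [e1, e2] at hk
      calc T ^ (α-1) * ((t₀+h-s) ^ (α-1) * U α lam s)
          = (T ^ (α-1) * (t₀+h-s) ^ (α-1)) * U α lam s := by ring
        _ ≤ (t₀ ^ (α-1) * (T+h-s) ^ (α-1)) * U α lam s := mul_le_mul_of_nonneg_right hk hU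
        _ = t₀ ^ (α-1) * ((T+h-s) ^ (α-1) * U α lam s) := by ring
    -- assemble the contradiction
    have e1 : t₀ ^ (α-1) * W T = t₀ ^ (α-1) * F T + c * (t₀ ^ (α-1) * A) + c * (t₀ ^ (α-1) * B) := by
      rw [hWT]; ring
    have e0 : T ^ (α-1) * F t₀ + c * (T ^ (α-1) * A₀) = 0 := by
      have : (0:ℝ) = T ^ (α-1) * (F t₀ + c * A₀) := by rw [← hWt₀]; ring
      linarith [this]
    have i2 : c * (t₀ ^ (α-1) * A) ≥ c * (T ^ (α-1) * A₀) :=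
      mul_le_mul_of_nonpos_left hII hc.le
    have i3 : 0 ≤ c * (t₀ ^ (α-1) * B) := by
      have hx : t₀ ^ (α-1) * B ≤ 0 := mul_nonpos_of_nonneg_of_nonpos ht₀r.le hBle
      have := mul_nonneg (neg_nonneg.2 hc.le) (neg_nonneg.2 hx)
      rwa [neg_mul_neg] at this
    have hfinal : 0 ≤ t₀ ^ (α-1) * W T := by linarith
    have : t₀ ^ (α-1) * W T < 0 := mul_neg_of_pos_of_neg ht₀r hTS.2
    linarith

lemma U_antitoneOn (hα : 0 < α) (hα1 : α < 1) (hlam : lam < 0) :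
    AntitoneOn (U α lam) (Ici (0:ℝ)) := by
  intro a ha b hb hab
  rcases eq_or_lt_of_le hab with h | h
  · rw [h]
  · have := U_antitone_aux hα hα1 hlam (show 0 < b - a by linarith) a ha
    simpa using this

lemma U_eq_zero_forever (hα : 0 < α) (hα1 : α < 1) (hlam : lam < 0) {t₁ : ℝ}
    (ht₁ : 0 < t₁) (hz : U α lam t₁ = 0) : ∀ s, t₁ ≤ s → U α lam s = 0 := by
  intro s hs
  have h1 : U α lam s ≤ U α lam t₁ :=
    U_antitoneOn hα hα1 hlam (mem_Ici.2 ht₁.le) (mem_Ici.2 (by linarith)) hs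
  have h2 : 0 ≤ U α lam s := U_nonneg hα hα1 hlam s (by linarith)
  rw [hz] at h1
  linarith

lemma U_pos (hα : 0 < α) (hα1 : α < 1) (hlam : lam < 0) :
    ∀ t : ℝ, 0 ≤ t → 0 < U α lam t := by
  intro t₁ ht₁0
  rcases eq_or_lt_of_le ht₁0 with h | h
  · rw [← h, U_zero hα]; norm_num
  · by_contra hng
    push_neg at hng
    have hz : U α lam t₁ = 0 :=
      le_antisymm hng (U_nonneg hα hα1 hlam t₁ ht₁0)
    have hΓα : 0 < Real.Gamma α := Real.Gamma_pos_of_pos hα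
    have hc : lam / Real.Gamma α < 0 := div_neg_of_neg_of_pos hlam hΓα
    have hcont : Continuous (U α lam) := continuous_U hα hα1
    have hzero := U_eq_zero_forever hα hα1 hlam h hz
    -- choose a large time
    have htend : Tendsto (fun x : ℝ => x ^ (α-1)) atTop (𝓝 0) := by
      have h0 := tendsto_rpow_neg_atTop (y := 1-α) (by linarith)
      have he : (fun x : ℝ => x ^ (-(1-α))) = fun x : ℝ => x ^ (α-1) := by
        funext x; congr 1; ring
      rwa [he] at h0
    set ε₀ : ℝ := 1 / ((-(lam / Real.Gamma α)) * t₁ + 1) with hε₀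
    have hcpos : 0 < -(lam / Real.Gamma α) := by linarith
    have hε₀pos : 0 < ε₀ := by
      apply div_pos one_pos
      have : 0 < (-(lam / Real.Gamma α)) * t₁ := mul_pos hcpos h
      linarith
    obtain ⟨M, hM⟩ := ((htend.eventually (eventually_lt_nhds hε₀pos)).and
      (eventually_ge_atTop (1:ℝ))).exists
    obtain ⟨hMε, hM1⟩ := hM
    set t := t₁ + M with htdef
    have htpos : 0 < t := by simp only [htdef]; linarith
    have ht₁t : t₁ < t := by simp only [htdef]; linarith
    have heq := inteq hα hα1 hlam htpos
    have hUt : U α lam t = 0 := hzero t ht₁t.le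
    -- split
    have hsub1 : uIcc (0:ℝ) t₁ ⊆ uIcc (0:ℝ) t := by
      rw [uIcc_of_le ht₁0, uIcc_of_le htpos.le]
      exact Icc_subset_Icc le_rfl ht₁t.le
    have hsub2 : uIcc t₁ t ⊆ uIcc (0:ℝ) t := by
      rw [uIcc_of_le ht₁t.le, uIcc_of_le htpos.le]
      exact Icc_subset_Icc ht₁0 le_rfl
    have hint1 : IntervalIntegrable (fun s => (t-s) ^ (α-1) * U α lam s) volume 0 t₁ :=
      ker_intble' hα hα1 hsub1 (hcont.continuousOn)
    have hint2 : IntervalIntegrable (fun s => (t-s) ^ (α-1) * U α lam s) volume t₁ t :=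
      (ker_intble hα hα1 (hcont.continuousOn)).mono_set hsub2
    have hsplit := intervalIntegral.integral_add_adjacent_intervals hint1 hint2
    rw [← hsplit] at heq
    have hI2 : (∫ s in t₁..t, (t-s) ^ (α-1) * U α lam s) = 0 := by
      have : (∫ s in t₁..t, (t-s) ^ (α-1) * U α lam s) = ∫ s in t₁..t, (0:ℝ) := by
        apply intervalIntegral.integral_congr
        intro s hs
        rw [uIcc_of_le ht₁t.le] at hs
        show (t-s) ^ (α-1) * U α lam s = (0:ℝ)
        rw [hzero s hs.1, mul_zero]
      rw [this, intervalIntegral.integral_zero]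
    rw [hI2, add_zero, hUt] at heq
    -- bound the remaining integral
    have hIbound : (∫ s in (0:ℝ)..t₁, (t-s) ^ (α-1) * U α lam s) ≤ t₁ * (t - t₁) ^ (α-1) := by
      have hmono := intervalIntegral.integral_mono_on (a := 0) (b := t₁)
        (g := fun _ : ℝ => (t-t₁) ^ (α-1)) ht₁0 hint1 intervalIntegrable_const ?_
      · rw [intervalIntegral.integral_const, smul_eq_mul, sub_zero] at hmono
        exact hmono
      · intro s hs
        have hks : (t-s) ^ (α-1) ≤ (t-t₁) ^ (α-1) :=
          rpow_kernel_mono hα1 (by linarith) (by linarith [hs.2])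
        have hU1 : U α lam s ≤ 1 := U_le_one hα hα1 hlam s hs.1
        have hU0 : 0 ≤ U α lam s := U_nonneg hα hα1 hlam s hs.1
        have hk0 : (0:ℝ) ≤ (t-s) ^ (α-1) := Real.rpow_nonneg (by linarith [hs.2]) _
        calc (t-s) ^ (α-1) * U α lam s ≤ (t-s) ^ (α-1) * 1 :=
              mul_le_mul_of_nonneg_left hU1 hk0
          _ = (t-s) ^ (α-1) := mul_one _
          _ ≤ (t-t₁) ^ (α-1) := hks
    -- contradiction
    have hIge : (0:ℝ) ≤ ∫ s in (0:ℝ)..t₁, (t-s) ^ (α-1) * U α lam s := by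
      apply intervalIntegral.integral_nonneg ht₁0
      intro s hs
      have h1 : (0:ℝ) ≤ (t-s) ^ (α-1) := Real.rpow_nonneg (by linarith [hs.2]) _
      have h2 : 0 ≤ U α lam s := U_nonneg hα hα1 hlam s hs.1
      positivity
    have hM' : t - t₁ = M := by simp only [htdef]; ring
    have hlast : (-(lam / Real.Gamma α)) * (t₁ * (t - t₁) ^ (α-1)) < 1 := by
      rw [hM']
      have hMr : M ^ (α-1) < ε₀ := hMε
      have hMrpos : 0 ≤ M ^ (α-1) := Real.rpow_nonneg (by linarith) _
      have h1 : (-(lam / Real.Gamma α)) * (t₁ * M ^ (α-1))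
          < (-(lam / Real.Gamma α)) * (t₁ * ε₀) := by
        apply mul_lt_mul_of_pos_left _ hcpos
        exact mul_lt_mul_of_pos_left hMr h
      have h2 : (-(lam / Real.Gamma α)) * (t₁ * ε₀) < 1 := by
        have hden : 0 < (-(lam / Real.Gamma α)) * t₁ + 1 := by
          have := mul_pos hcpos h
          linarith
        have he : (-(lam / Real.Gamma α)) * (t₁ * ε₀)
            = ((-(lam / Real.Gamma α)) * t₁) / ((-(lam / Real.Gamma α)) * t₁ + 1) := by
          rw [hε₀]
          field_simp
        rw [he, div_lt_one hden]
        linarith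
      linarith
    nlinarith [hIbound, hIge, hlast, hcpos]

lemma U_tendsto (hα : 0 < α) (hα1 : α < 1) (hlam : lam < 0) :
    Tendsto (U α lam) atTop (𝓝 0) := by
  have hΓα : 0 < Real.Gamma α := Real.Gamma_pos_of_pos hα
  have hc : lam / Real.Gamma α < 0 := div_neg_of_neg_of_pos hlam hΓα
  have hcpos : 0 < -(lam / Real.Gamma α) := by linarith
  have hcont : Continuous (U α lam) := continuous_U hα hα1
  rw [Metric.tendsto_atTop]
  intro ε hε
  -- first find one point where U < ε
  have hT : ∃ T : ℝ, 0 ≤ T ∧ U α lam T < ε := by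
    by_contra hng
    push_neg at hng
    obtain ⟨t, ht⟩ := (((tendsto_rpow_atTop hα).eventually_gt_atTop
      (α / ((-(lam / Real.Gamma α)) * ε))).and (eventually_gt_atTop (0:ℝ))).exists
    obtain ⟨htb, htpos⟩ := ht
    have heq := inteq hα hα1 hlam htpos
    have hmono : (∫ s in (0:ℝ)..t, (t-s) ^ (α-1) * ε)
        ≤ ∫ s in (0:ℝ)..t, (t-s) ^ (α-1) * U α lam s := by
      apply intervalIntegral.integral_mono_on htpos.le
        (ker_intble hα hα1 continuousOn_const)
        (ker_intble hα hα1 (hcont.continuousOn))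
      intro s hs
      have h1 : (0:ℝ) ≤ (t-s) ^ (α-1) := Real.rpow_nonneg (by linarith [hs.2]) _
      exact mul_le_mul_of_nonneg_left (hng s hs.1) h1
    have hval : (∫ s in (0:ℝ)..t, (t-s) ^ (α-1) * ε) = t ^ α / α * ε := by
      rw [intervalIntegral.integral_mul_const, ker_total hα hα1 htpos]
    have hU1 : U α lam t ≤ 1 := U_le_one hα hα1 hlam t htpos.le
    have hU0 : 0 ≤ U α lam t := U_nonneg hα hα1 hlam t htpos.le
    -- 1 - U t = -c * ∫ ≥ -c * (t^α/α) ε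
    have hkey : (-(lam / Real.Gamma α)) * (t ^ α / α * ε) ≤ 1 := by
      rw [hval] at hmono
      nlinarith [heq, hmono, hU0]
    -- but t^α > α / (-c ε)
    have h2 := (div_lt_iff₀ (mul_pos hcpos hε)).1 htb
    have h4 : t ^ α * ((-(lam / Real.Gamma α)) * ε) ≤ α := by
      have h5 := mul_le_mul_of_nonneg_left hkey (le_of_lt hα)
      have h6 : t ^ α * ((-(lam / Real.Gamma α)) * ε)
          = α * ((-(lam / Real.Gamma α)) * (t ^ α / α * ε)) := by
        field_simp
      rw [h6]
      linarith
    linarith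
  obtain ⟨T, hT0, hTε⟩ := hT
  refine ⟨T, fun t htT => ?_⟩
  have ht0 : 0 ≤ t := le_trans hT0 htT
  have hle : U α lam t ≤ U α lam T :=
    U_antitoneOn hα hα1 hlam (mem_Ici.2 hT0) (mem_Ici.2 ht0) htT
  have hge : 0 ≤ U α lam t := U_nonneg hα hα1 hlam t ht0
  rw [Real.dist_eq, sub_zero, abs_of_nonneg hge]
  linarith

end MLaux

/-- for `α ∈ (0,1)` and `λ < 0`, the function
`y(t) = E_α(λ t^α)` satisfies `0 < y(t) ≤ 1`, is nonincreasing on `[0,∞)`,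
and tends to `0` as `t → ∞`. -/
theorem mittagLeffler_pos_antitone_tendsto_zero (α lam : ℝ)
    (hα : 0 < α) (hα1 : α < 1) (hlam : lam < 0) :
    (∀ t : ℝ, 0 ≤ t →
      0 < mittagLeffler α (lam * t ^ α) ∧ mittagLeffler α (lam * t ^ α) ≤ 1) ∧
    AntitoneOn (fun t : ℝ => mittagLeffler α (lam * t ^ α)) (Ici (0:ℝ)) ∧
    Tendsto (fun t : ℝ => mittagLeffler α (lam * t ^ α)) atTop (nhds 0) := by
  have hU : (fun t : ℝ => mittagLeffler α (lam * t ^ α)) = MLaux.U α lam := rfl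
  refine ⟨fun t ht => ⟨MLaux.U_pos hα hα1 hlam t ht, MLaux.U_le_one hα hα1 hlam t ht⟩, ?_, ?_⟩
  · rw [hU]
    exact MLaux.U_antitoneOn hα hα1 hlam
  · rw [hU]
    exact MLaux.U_tendsto hα hα1 hlam
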